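/- arXiv:2102.02093 — 3 statements merged into one kernel-verified Lean document; each statement's English description precedes it below -/
import Mathlib

section
/- Let n be a positive integer, let D be an n×n real diagonal matrix whose diagonal entries are all positive (in particular nonzero), and let A be an n×n real skew-symmetric matrix (Aᵀ = −A). Then every eigenvalue of the matrix J₀ = D·A (viewed as a complex matrix) is purely imaginary or zero; that is, every λ in the spectrum of J₀ over ℂ satisfies Re(λ) = 0. -/
open Matrix

/-- Lemma 1: if `D` is a real diagonal matrix with positive diagonal entries and `A` is a
real skew-symmetric matrix, every eigenvalue of `J₀ = D * A` (over `ℂ`) is purely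
imaginary or zero. -/
theorem stmt_0 (n : ℕ) (hn : 0 < n) (d : Fin n → ℝ) (hd : ∀ i, 0 < d i)
    (A : Matrix (Fin n) (Fin n) ℝ) (hA : Aᵀ = -A) :
    ∀ μ ∈ spectrum ℂ ((Matrix.diagonal d * A).map (Complex.ofReal ·)), μ.re = 0 := by
  intro μ hμ
  set M : Matrix (Fin n) (Fin n) ℂ := (Matrix.diagonal d * A).map (Complex.ofReal ·) with hM
  rw [spectrum.mem_iff] at hμ
  have hdet : (algebraMap ℂ (Matrix (Fin n) (Fin n) ℂ) μ - M).det = 0 := by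
    by_contra h
    exact hμ ((Matrix.isUnit_iff_isUnit_det _).mpr (isUnit_iff_ne_zero.mpr h))
  obtain ⟨v, hv0, hv⟩ := (Matrix.exists_mulVec_eq_zero_iff).mpr hdet
  have heig : ∀ i, (∑ j, ((d i * A i j : ℝ) : ℂ) * v j) = μ * v i := by
    intro i
    have h0 := congrFun hv i
    simp only [Matrix.sub_mulVec, Pi.sub_apply, Pi.zero_apply, sub_eq_zero] at h0
    have h1 : (algebraMap ℂ (Matrix (Fin n) (Fin n) ℂ) μ).mulVec v i = μ * v i := by
      simp [Matrix.algebraMap_eq_diagonal, Matrix.mulVec_diagonal]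
    have h2 : M.mulVec v i = ∑ j, ((d i * A i j : ℝ) : ℂ) * v j := by
      simp [Matrix.mulVec, dotProduct, hM, Matrix.map_apply, Matrix.diagonal_mul]
    rw [← h2, ← h0]
    exact h1
  set S : ℂ := ∑ i, ∑ j, ((A i j : ℝ) : ℂ) * (starRingEnd ℂ (v i) * v j) with hS
  have hskew : ∀ i j, A j i = -A i j := fun i j => by
    have := congrFun (congrFun hA i) j
    simpa [Matrix.transpose_apply] using this
  have hconj : (starRingEnd ℂ) S = -S := by
    calc (starRingEnd ℂ) S
        = ∑ i, ∑ j, ((A i j : ℝ) : ℂ) * (v i * (starRingEnd ℂ) (v j)) := by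
          rw [hS]
          simp [map_sum, _root_.map_mul, Complex.conj_ofReal, Complex.conj_conj]
      _ = ∑ j, ∑ i, ((A i j : ℝ) : ℂ) * (v i * (starRingEnd ℂ) (v j)) := by
          exact Finset.sum_comm
      _ = ∑ j, ∑ i, -(((A j i : ℝ) : ℂ) * ((starRingEnd ℂ) (v j) * v i)) := by
          refine Finset.sum_congr rfl fun j _ => Finset.sum_congr rfl fun i _ => ?_
          rw [hskew j i]
          push_cast
          ring
      _ = -S := by
          rw [hS]
          simp
  have hSre : S.re = 0 := by
    have := congrArg Complex.re hconj
    simp [Complex.conj_re] at this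
    linarith
  set t : ℝ := ∑ i, Complex.normSq (v i) / d i with ht
  have hSt : S = μ * (t : ℝ) := by
    rw [hS]
    have key : ∀ i, ∑ j, ((A i j : ℝ) : ℂ) * (starRingEnd ℂ (v i) * v j)
        = starRingEnd ℂ (v i) * (μ * v i) / (d i : ℂ) := by
      intro i
      have hdne : (d i : ℂ) ≠ 0 := by exact_mod_cast (hd i).ne'
      rw [← heig i, Finset.mul_sum, Finset.sum_div]
      refine Finset.sum_congr rfl fun j _ => ?_
      field_simp
      push_cast
      ring
    rw [Finset.sum_congr rfl fun i _ => key i, ht]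
    push_cast
    rw [Finset.mul_sum]
    refine Finset.sum_congr rfl fun i _ => ?_
    have hdne : (d i : ℂ) ≠ 0 := by exact_mod_cast (hd i).ne'
    rw [Complex.normSq_eq_conj_mul_self]
    field_simp
  have htpos : 0 < t := by
    have hvne : ∃ i, v i ≠ 0 := by
      by_contra h
      push_neg at h
      exact hv0 (funext h)
    obtain ⟨i, hi⟩ := hvne
    refine Finset.sum_pos' (fun j _ => div_nonneg (Complex.normSq_nonneg _) (hd j).le) ?_
    exact ⟨i, Finset.mem_univ i, div_pos (Complex.normSq_pos.mpr hi) (hd i)⟩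
  have hfin : μ.re * t = 0 := by
    have := congrArg Complex.re hSt
    rw [hSre] at this
    simpa [Complex.mul_re, Complex.ofReal_re, Complex.ofReal_im] using this.symm
  rcases mul_eq_zero.mp hfin with h | h
  · exact h
  · exact absurd h htpos.ne'
end

section
/- The negative redundancy (negative overhead) F₃ is convex: let S be a finite set of vertices and E ⊆ S × S a set of arcs. For p : E → ℝ, define the row marginal p_{i·} = Σ_{j : (i,j) ∈ E} p(i,j) and the column marginal p_{·j} = Σ_{i : (i,j) ∈ E} p(i,j). Then the function F₃(p) = Σ_{(i,j) ∈ E} p(i,j) · log( p(i,j)² / (p_{i·} · p_{·j}) ) is convex on the set {p | ∀ (i,j) ∈ E, 0 < p(i,j)} of strictly positive vectors. -/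
open Finset Real

/-- Joint convexity of `(x, y) ↦ x * log (x / y)` on the positive quadrant. -/
lemma aux_convexOn_mul_log_div :
    ConvexOn ℝ (Set.Ioi (0:ℝ) ×ˢ Set.Ioi (0:ℝ)) (fun q : ℝ × ℝ => q.1 * Real.log (q.1 / q.2)) := by
  refine ⟨(convex_Ioi (0:ℝ)).prod (convex_Ioi 0), ?_⟩
  rintro ⟨x₁, y₁⟩ ⟨hx₁, hy₁⟩ ⟨x₂, y₂⟩ ⟨hx₂, hy₂⟩ a b ha hb hab
  simp only [Set.mem_Ioi] at hx₁ hy₁ hx₂ hy₂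
  rcases ha.eq_or_lt with rfl | ha'
  · simp at hab; simp [hab]
  rcases hb.eq_or_lt with rfl | hb'
  · simp at hab; simp [hab]
  simp only [Prod.smul_mk, Prod.mk_add_mk, smul_eq_mul]
  set y : ℝ := a * y₁ + b * y₂ with hy
  have hypos : 0 < y := by positivity
  have key := Real.convexOn_mul_log.2 (Set.mem_Ici.2 (div_nonneg hx₁.le hy₁.le))
    (Set.mem_Ici.2 (div_nonneg hx₂.le hy₂.le))
    (show (0:ℝ) ≤ a * y₁ / y by positivity) (show (0:ℝ) ≤ b * y₂ / y by positivity)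
    (show a * y₁ / y + b * y₂ / y = 1 by field_simp; exact hy.symm)
  simp only [smul_eq_mul] at key
  have h1 : a * y₁ / y * (x₁ / y₁) = a * x₁ / y := by field_simp
  have h2 : b * y₂ / y * (x₂ / y₂) = b * x₂ / y := by field_simp
  rw [h1, h2, ← add_div] at key
  have key2 := mul_le_mul_of_nonneg_left key hypos.le
  calc (a * x₁ + b * x₂) * Real.log ((a * x₁ + b * x₂) / y)
      = y * ((a * x₁ + b * x₂) / y * Real.log ((a * x₁ + b * x₂) / y)) := by
        field_simp
    _ ≤ y * (a * y₁ / y * (x₁ / y₁ * Real.log (x₁ / y₁)) +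
          b * y₂ / y * (x₂ / y₂ * Real.log (x₂ / y₂))) := key2
    _ = a * (x₁ * Real.log (x₁ / y₁)) + b * (x₂ * Real.log (x₂ / y₂)) := by
        field_simp

/-- A finite sum of convex functions is convex. -/
lemma aux_convexOn_sum {ι α : Type*} [AddCommGroup α] [Module ℝ α] {s : Set α}
    (hs : Convex ℝ s) {t : Finset ι} {f : ι → α → ℝ}
    (h : ∀ i ∈ t, ConvexOn ℝ s (f i)) : ConvexOn ℝ s (fun x => ∑ i ∈ t, f i x) := by
  classical
  induction t using Finset.cons_induction with
  | empty => simpa using convexOn_const 0 hs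
  | cons i t hi ih =>
    simp only [Finset.sum_cons]
    exact (h i (Finset.mem_cons_self _ _)).add (ih fun j hj => h j (Finset.mem_cons_of_mem hj))

/-- Negative redundancy (negative overhead)
`F₃(p) = ∑_{(i,j) ∈ E} p(i,j) * log (p(i,j)² / (p_{i·} p_{·j}))` is convex on the set of
vectors that are strictly positive on the arcs `E`, where `p_{i·}` and `p_{·j}` denote
the row and column marginals over `E`. -/
theorem stmt_7 (S : Type*) [Fintype S] [DecidableEq S] (E : Finset (S × S)) :
    ConvexOn ℝ {p : S × S → ℝ | ∀ e ∈ E, 0 < p e}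
      (fun p : S × S → ℝ => ∑ e ∈ E, p e *
        Real.log (p e ^ 2 /
          ((∑ e' ∈ E.filter (fun e' => e'.1 = e.1), p e') *
           (∑ e' ∈ E.filter (fun e' => e'.2 = e.2), p e')))) := by
  classical
  have hconv : Convex ℝ {p : S × S → ℝ | ∀ e ∈ E, 0 < p e} := by
    intro p hp q hq a b ha hb hab e he
    simp only [Pi.add_apply, Pi.smul_apply, smul_eq_mul]
    rcases ha.eq_or_lt with rfl | ha'
    · simp at hab; simpa [hab] using hq e he
    · exact add_pos_of_pos_of_nonneg (mul_pos ha' (hp e he))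
        (mul_nonneg hb (hq e he).le)
  -- each KL-type term is convex
  have hterm : ∀ (m : (S × S) → Finset (S × S)), (∀ e ∈ E, e ∈ m e) → (∀ e ∈ E, m e ⊆ E) →
      ∀ e ∈ E, ConvexOn ℝ {p : S × S → ℝ | ∀ e ∈ E, 0 < p e}
        (fun p : S × S → ℝ => p e * Real.log (p e / ∑ e' ∈ m e, p e')) := by
    intro m hmem hsub e he
    set L : (S × S → ℝ) →ₗ[ℝ] ℝ × ℝ :=
      (LinearMap.proj e).prod (∑ e' ∈ m e, LinearMap.proj e') with hL
    have hLapp : ∀ p : S × S → ℝ, L p = (p e, ∑ e' ∈ m e, p e') := by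
      intro p
      simp [hL, LinearMap.prod_apply, Pi.prod, LinearMap.proj_apply]
    have hsubset : {p : S × S → ℝ | ∀ e ∈ E, 0 < p e} ⊆
        L ⁻¹' (Set.Ioi (0:ℝ) ×ˢ Set.Ioi (0:ℝ)) := by
      intro p hp
      simp only [Set.mem_preimage, hLapp, Set.mem_prod, Set.mem_Ioi]
      exact ⟨hp e he, Finset.sum_pos (fun e' he' => hp e' (hsub e he he')) ⟨e, hmem e he⟩⟩
    refine ((aux_convexOn_mul_log_div.comp_linearMap L).subset hsubset hconv).congr ?_
    intro p _
    simp [Function.comp, hLapp]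
  have h1 := hterm (fun e => E.filter (fun e' => e'.1 = e.1))
    (fun e he => Finset.mem_filter.2 ⟨he, rfl⟩) (fun e _ => Finset.filter_subset _ _)
  have h2 := hterm (fun e => E.filter (fun e' => e'.2 = e.2))
    (fun e he => Finset.mem_filter.2 ⟨he, rfl⟩) (fun e _ => Finset.filter_subset _ _)
  have hsum : ConvexOn ℝ {p : S × S → ℝ | ∀ e ∈ E, 0 < p e}
      (fun p : S × S → ℝ => ∑ e ∈ E,
        (p e * Real.log (p e / ∑ e' ∈ E.filter (fun e' => e'.1 = e.1), p e') +
         p e * Real.log (p e / ∑ e' ∈ E.filter (fun e' => e'.2 = e.2), p e'))) :=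
    aux_convexOn_sum hconv (fun e he => (h1 e he).add (h2 e he))
  refine hsum.congr ?_
  intro p hp
  refine Finset.sum_congr rfl fun e he => ?_
  have hpe : 0 < p e := hp e he
  have hr : 0 < ∑ e' ∈ E.filter (fun e' => e'.1 = e.1), p e' :=
    Finset.sum_pos (fun e' he' => hp e' (Finset.mem_filter.1 he').1)
      ⟨e, Finset.mem_filter.2 ⟨he, rfl⟩⟩
  have hc : 0 < ∑ e' ∈ E.filter (fun e' => e'.2 = e.2), p e' :=
    Finset.sum_pos (fun e' he' => hp e' (Finset.mem_filter.1 he').1)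
      ⟨e, Finset.mem_filter.2 ⟨he, rfl⟩⟩
  rw [← mul_add, ← Real.log_mul (by positivity) (by positivity), div_mul_div_comm, ← sq]
end

section
/- The ascendency is not convex: the function A : ℝ³ → ℝ defined on triples (f₁₂, f₂₃, f₁₃) by A(f₁₂, f₂₃, f₁₃) = f₁₃ · log( f₁₃ / ((f₁₃ + f₁₂)(f₂₃ + f₁₃)) ) − f₂₃ · log(f₂₃ + f₁₃) − f₁₂ · log(f₁₃ + f₁₂) is not convex on the set {(f₁₂, f₂₃, f₁₃) | f₁₂ > 0, f₂₃ > 0, f₁₃ > 0} of strictly positive triples. -/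
/-- The ascendency
`A(f₁₂, f₂₃, f₁₃) = f₁₃ log(f₁₃/((f₁₃+f₁₂)(f₂₃+f₁₃))) − f₂₃ log(f₂₃+f₁₃) − f₁₂ log(f₁₃+f₁₂)`
is not convex on the open positive octant of `ℝ³`. -/
theorem stmt_8 :
    ¬ ConvexOn ℝ {f : ℝ × ℝ × ℝ | 0 < f.1 ∧ 0 < f.2.1 ∧ 0 < f.2.2}
      (fun f : ℝ × ℝ × ℝ =>
        f.2.2 * Real.log (f.2.2 / ((f.2.2 + f.1) * (f.2.1 + f.2.2)))
          - f.2.1 * Real.log (f.2.1 + f.2.2)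
          - f.1 * Real.log (f.2.2 + f.1)) := by
  intro h
  have hx : ((1 : ℝ), (1 : ℝ), (1 : ℝ)) ∈
      {f : ℝ × ℝ × ℝ | 0 < f.1 ∧ 0 < f.2.1 ∧ 0 < f.2.2} := by norm_num
  have hy : ((3 : ℝ), (1 : ℝ), (1 : ℝ)) ∈
      {f : ℝ × ℝ × ℝ | 0 < f.1 ∧ 0 < f.2.1 ∧ 0 < f.2.2} := by norm_num
  have H := h.2 hx hy (by norm_num : (0:ℝ) ≤ 1/2) (by norm_num : (0:ℝ) ≤ 1/2)
    (by norm_num)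
  simp only [Prod.smul_mk, smul_eq_mul, Prod.mk_add_mk] at H
  norm_num at H
  -- rewrite logs
  have l6 : Real.log 6 = Real.log 2 + Real.log 3 := by
    rw [show (6:ℝ) = 2 * 3 by norm_num, Real.log_mul (by norm_num) (by norm_num)]
  have l4 : Real.log 4 = 2 * Real.log 2 := by
    rw [show (4:ℝ) = 2 ^ 2 by norm_num, Real.log_pow]; push_cast; ring
  have l8 : Real.log 8 = 3 * Real.log 2 := by
    rw [show (8:ℝ) = 2 ^ 3 by norm_num, Real.log_pow]; push_cast; ring
  have key : Real.log 27 < Real.log 32 :=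
    Real.log_lt_log (by norm_num) (by norm_num)
  have l27 : Real.log 27 = 3 * Real.log 3 := by
    rw [show (27:ℝ) = 3 ^ 3 by norm_num, Real.log_pow]; push_cast; ring
  have l32 : Real.log 32 = 5 * Real.log 2 := by
    rw [show (32:ℝ) = 2 ^ 5 by norm_num, Real.log_pow]; push_cast; ring
  rw [l27, l32] at key
  -- H should involve log(1/6), log(1/4), log(1/8) etc.
  rw [Real.log_div (by norm_num) (by norm_num)] at H
  have i4 : Real.log (1/4) = -(2 * Real.log 2) := by
    rw [one_div, Real.log_inv, l4]
  have i8 : Real.log (1/8) = -(3 * Real.log 2) := by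
    rw [one_div, Real.log_inv, l8]
  rw [Real.log_one, i4, i8, l6, l4] at H
  linarith
end
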